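/- The logarithmic mean θ(s,t) = ∫₀¹ s^(1-p) t^p dp is a concave function on [0,∞) × [0,∞). -/

import Mathlib

open Set MeasureTheory

/-- Pointwise concavity of the weighted geometric mean. -/
lemma geom_mean_pointwise_concave {s₁ t₁ s₂ t₂ a b p : ℝ}
    (hs₁ : 0 ≤ s₁) (ht₁ : 0 ≤ t₁) (hs₂ : 0 ≤ s₂) (ht₂ : 0 ≤ t₂)
    (ha : 0 ≤ a) (hb : 0 ≤ b) (hab : a + b = 1) (hp0 : 0 ≤ p) (hp1 : p ≤ 1) :
    a * (s₁ ^ (1 - p) * t₁ ^ p) + b * (s₂ ^ (1 - p) * t₂ ^ p)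
      ≤ (a * s₁ + b * s₂) ^ (1 - p) * (a * t₁ + b * t₂) ^ p := by
  set S := a * s₁ + b * s₂ with hSdef
  set T := a * t₁ + b * t₂ with hTdef
  have hS : 0 ≤ S := by positivity
  have hT : 0 ≤ T := by positivity
  rcases eq_or_lt_of_le hS with hS0 | hSpos
  · -- S = 0
    have hs : a * s₁ = 0 ∧ b * s₂ = 0 := by
      constructor <;> nlinarith [mul_nonneg ha hs₁, mul_nonneg hb hs₂]
    rcases eq_or_lt_of_le hp1 with hp | hp
    · -- p = 1
      subst hp
      simp only [sub_self, Real.rpow_zero, Real.rpow_one, one_mul]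
      linarith
    · -- p < 1, so 1 - p > 0 and each LHS term vanishes
      have h1 : a * (s₁ ^ (1 - p) * t₁ ^ p) = 0 := by
        rcases mul_eq_zero.mp hs.1 with h | h
        · rw [h]; ring
        · rw [h, Real.zero_rpow (by linarith)]; ring
      have h2 : b * (s₂ ^ (1 - p) * t₂ ^ p) = 0 := by
        rcases mul_eq_zero.mp hs.2 with h | h
        · rw [h]; ring
        · rw [h, Real.zero_rpow (by linarith)]; ring
      rw [h1, h2]
      have : 0 ≤ S ^ (1 - p) * T ^ p := by positivity
      linarith
  · rcases eq_or_lt_of_le hT with hT0 | hTpos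
    · -- T = 0
      have hts : a * t₁ = 0 ∧ b * t₂ = 0 := by
        constructor <;> nlinarith [mul_nonneg ha ht₁, mul_nonneg hb ht₂]
      rcases eq_or_lt_of_le hp0 with hp | hp
      · -- p = 0
        subst hp
        simp only [sub_zero, Real.rpow_zero, Real.rpow_one, mul_one]
        linarith
      · have h1 : a * (s₁ ^ (1 - p) * t₁ ^ p) = 0 := by
          rcases mul_eq_zero.mp hts.1 with h | h
          · rw [h]; ring
          · rw [h, Real.zero_rpow (ne_of_gt hp)]; ring
        have h2 : b * (s₂ ^ (1 - p) * t₂ ^ p) = 0 := by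
          rcases mul_eq_zero.mp hts.2 with h | h
          · rw [h]; ring
          · rw [h, Real.zero_rpow (ne_of_gt hp)]; ring
        rw [h1, h2]
        have : 0 ≤ S ^ (1 - p) * T ^ p := by positivity
        linarith
    · -- S > 0, T > 0
      have hSpos : (0:ℝ) < S := hSpos
      have hTpos : (0:ℝ) < T := hTpos
      have hK : (0:ℝ) < S ^ (1 - p) * T ^ p := by positivity
      have key : ∀ s t : ℝ, 0 ≤ s → 0 ≤ t →
          s ^ (1 - p) * t ^ p ≤ ((1 - p) * (s / S) + p * (t / T)) * (S ^ (1 - p) * T ^ p) := by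
        intro s t hs ht
        have g := Real.geom_mean_le_arith_mean2_weighted (by linarith : (0:ℝ) ≤ 1 - p) hp0
          (div_nonneg hs hS) (div_nonneg ht hT) (by ring)
        have := mul_le_mul_of_nonneg_right g hK.le
        have heq : (s / S) ^ (1 - p) * (t / T) ^ p * (S ^ (1 - p) * T ^ p)
            = s ^ (1 - p) * t ^ p := by
          rw [Real.div_rpow hs hS, Real.div_rpow ht hT]
          have h1 : S ^ (1 - p) ≠ 0 := ne_of_gt (Real.rpow_pos_of_pos hSpos _)
          have h2 : T ^ p ≠ 0 := ne_of_gt (Real.rpow_pos_of_pos hTpos _)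
          field_simp
        linarith [this, heq.ge, heq.le]
      have k1 := key s₁ t₁ hs₁ ht₁
      have k2 := key s₂ t₂ hs₂ ht₂
      have l1 := mul_le_mul_of_nonneg_left k1 ha
      have l2 := mul_le_mul_of_nonneg_left k2 hb
      have hc : a * (((1 - p) * (s₁ / S) + p * (t₁ / T)) * (S ^ (1 - p) * T ^ p))
          + b * (((1 - p) * (s₂ / S) + p * (t₂ / T)) * (S ^ (1 - p) * T ^ p))
          = S ^ (1 - p) * T ^ p := by
        have hS0 : S ≠ 0 := ne_of_gt hSpos
        have hT0 : T ≠ 0 := ne_of_gt hTpos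
        field_simp
        ring
      linarith

/-- Interval integrability of the integrand. -/
lemma theta_integrable {s t : ℝ} (hs : 0 ≤ s) (ht : 0 ≤ t) :
    IntervalIntegrable (fun p : ℝ => s ^ (1 - p) * t ^ p) volume 0 1 := by
  rcases eq_or_lt_of_le hs with hs0 | hspos
  · -- s = 0 : a.e. zero on (0,1]
    rw [intervalIntegrable_iff_integrableOn_Ioc_of_le zero_le_one]
    apply (integrableOn_congr_fun_ae (f := fun _ => (0:ℝ)) ?_).mp ((integrableOn_const_iff).mpr (by simp))
    have hne : ∀ᵐ p : ℝ, p ≠ 1 := by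
      rw [MeasureTheory.ae_iff]
      simpa using (by simp : volume ({(1:ℝ)} : Set ℝ) = 0)
    filter_upwards [ae_restrict_of_ae hne] with p hp
    rw [← hs0, Real.zero_rpow (sub_ne_zero.mpr (Ne.symm hp))]
    ring
  · rcases eq_or_lt_of_le ht with ht0 | htpos
    · -- t = 0 : zero on (0,1]
      rw [intervalIntegrable_iff_integrableOn_Ioc_of_le zero_le_one]
      apply (integrableOn_congr_fun_ae (f := fun _ => (0:ℝ)) ?_).mp
        ((integrableOn_const_iff).mpr (by simp))
      rw [Filter.EventuallyEq, ae_restrict_iff' measurableSet_Ioc]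
      filter_upwards with p hp
      rw [← ht0, Real.zero_rpow (ne_of_gt hp.1)]
      ring
    · -- s, t > 0 : continuous
      apply Continuous.intervalIntegrable
      have h1 : Continuous fun p : ℝ => s ^ (1 - p) := by
        simp only [Real.rpow_def_of_pos hspos]
        fun_prop
      have h2 : Continuous fun p : ℝ => t ^ p := by
        simp only [Real.rpow_def_of_pos htpos]
        fun_prop
      exact h1.mul h2

/-- The logarithmic mean `θ(s,t) = ∫₀¹ s^(1-p) t^p dp` is concave on `[0,∞) × [0,∞)`. -/
theorem log_mean_concave :
    ConcaveOn ℝ (Set.Ici (0:ℝ) ×ˢ Set.Ici (0:ℝ))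
      (fun st : ℝ × ℝ => ∫ p in (0:ℝ)..1, st.1 ^ (1 - p) * st.2 ^ p) := by
  constructor
  · exact (convex_Ici 0).prod (convex_Ici 0)
  · rintro ⟨s₁, t₁⟩ ⟨hs₁, ht₁⟩ ⟨s₂, t₂⟩ ⟨hs₂, ht₂⟩ a b ha hb hab
    simp only [Prod.smul_fst, Prod.smul_snd, Prod.fst_add, Prod.snd_add, smul_eq_mul,
      Prod.smul_mk, Prod.mk_add_mk] at *
    have hs₁ : (0:ℝ) ≤ s₁ := hs₁
    have ht₁ : (0:ℝ) ≤ t₁ := ht₁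
    have hs₂ : (0:ℝ) ≤ s₂ := hs₂
    have ht₂ : (0:ℝ) ≤ t₂ := ht₂
    have i1 := theta_integrable hs₁ ht₁
    have i2 := theta_integrable hs₂ ht₂
    have i3 := theta_integrable (show (0:ℝ) ≤ a * s₁ + b * s₂ by positivity)
      (show (0:ℝ) ≤ a * t₁ + b * t₂ by positivity)
    calc (a * ∫ p in (0:ℝ)..1, s₁ ^ (1 - p) * t₁ ^ p)
          + b * ∫ p in (0:ℝ)..1, s₂ ^ (1 - p) * t₂ ^ p
        = ∫ p in (0:ℝ)..1,
            (a * (s₁ ^ (1 - p) * t₁ ^ p) + b * (s₂ ^ (1 - p) * t₂ ^ p)) := by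
          rw [intervalIntegral.integral_add (i1.const_mul a) (i2.const_mul b),
            intervalIntegral.integral_const_mul, intervalIntegral.integral_const_mul]
      _ ≤ ∫ p in (0:ℝ)..1, (a * s₁ + b * s₂) ^ (1 - p) * (a * t₁ + b * t₂) ^ p := by
          apply intervalIntegral.integral_mono_on zero_le_one ((i1.const_mul a).add (i2.const_mul b)) i3
          intro p hp
          exact geom_mean_pointwise_concave hs₁ ht₁ hs₂ ht₂ ha hb hab hp.1 hp.2
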